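/- Let TA be a threshold automaton, let Φ be its set of guards, and let K = |Φ| + 1. For all configurations σ, σ' of TA: σ →* σ' if and only if there exist configurations σ = σ₀, σ'₀, σ₁, σ'₁, …, σ_K, σ'_K = σ' such that for every 0 ≤ i ≤ K there is a steady schedule τ_i applicable to σ_i with τ_i(σ_i) = σ'_i, and for every 0 ≤ i < K either σ_{i+1} = σ'_i or σ_{i+1} = r(σ'_i) for some rule r enabled at σ'_i. -/

import Mathlib

/-!
Threshold automata (Konnov, Veith, Widder), following
"Complexity of Verification and Synthesis of Threshold Automata".
-/

/-- A threshold guard `x ⋈ a₀ + a₁·p₁ + … + a_{|Π|}·p_{|Π|}` over shared variables `V` and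
parameters `P`.  `isRise = true` means a *rise* guard `x ≥ …`, and `isRise = false` means a
*fall* guard `x < …`. -/
structure TGuard (V P : Type) where
  var : V
  isRise : Bool
  a0 : ℚ
  coef : P → ℚ

/-- A configuration `σ = (κ, g, p)`: numbers of processes in each location, values of the
shared variables, and values of the parameters. -/
structure Config (L V P : Type) where
  κ : L → ℕ
  g : V → ℕ
  p : P → ℕ

/-- A rule of a threshold automaton: source and target locations, a guard that is a
(finite) conjunction of threshold guards, and an update `V → {0,1}`. -/
structure TRule (L V P : Type) where
  src : L
  dst : L
  guard : List (TGuard V P)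
  upd : V → ℕ
  upd_le_one : ∀ v, upd v ≤ 1

/-- A threshold automaton `(L, I, Γ, R)` together with its environment `(Π, RC, N)`.
`L`, `V`, `P` are the types of locations, shared variables and parameters, and `R` is the
index type of rules. -/
structure TA (L V P R : Type) where
  initial : Set L
  initial_nonempty : initial.Nonempty
  rc : Set (P → ℕ)
  N : (P → ℕ) → ℕ
  rule : R → TRule L V P

variable {L V P R : Type}

/-- Satisfaction of a threshold guard by values `g` of the shared variables and `p` of the
parameters. -/
def TGuard.holds [Fintype P] (φ : TGuard V P) (g : V → ℕ) (p : P → ℕ) : Prop :=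
  if φ.isRise then φ.a0 + ∑ i : P, φ.coef i * (p i : ℚ) ≤ (g φ.var : ℚ)
  else (g φ.var : ℚ) < φ.a0 + ∑ i : P, φ.coef i * (p i : ℚ)

/-- A configuration enables a rule. -/
def TRule.enabledAt [Fintype P] (r : TRule L V P) (σ : Config L V P) : Prop :=
  0 < σ.κ r.src ∧ ∀ φ ∈ r.guard, φ.holds σ.g σ.p

/-- The result of firing a rule at a configuration. -/
def TRule.fire [DecidableEq L] (r : TRule L V P) (σ : Config L V P) : Config L V P where
  κ := fun ℓ => σ.κ ℓ + (if ℓ = r.dst then 1 else 0) - (if ℓ = r.src then 1 else 0)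
  g := fun v => σ.g v + r.upd v
  p := σ.p

namespace TA

variable [Fintype P] [DecidableEq L]

/-- `σ` is a configuration of `ta`: the parameters satisfy the resilience condition and the
total number of processes is `N(p)`. -/
def validConfig [Fintype L] (ta : TA L V P R) (σ : Config L V P) : Prop :=
  σ.p ∈ ta.rc ∧ ∑ ℓ : L, σ.κ ℓ = ta.N σ.p

/-- Initial configurations. -/
def isInitial [Fintype L] (ta : TA L V P R) (σ : Config L V P) : Prop :=
  ta.validConfig σ ∧ (∀ ℓ, ℓ ∉ ta.initial → σ.κ ℓ = 0) ∧ ∀ v, σ.g v = 0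

/-- A schedule (finite sequence of rules) is applicable to a configuration. -/
def applicable (ta : TA L V P R) : Config L V P → List R → Prop
  | _, [] => True
  | σ, r :: τ => (ta.rule r).enabledAt σ ∧ ta.applicable ((ta.rule r).fire σ) τ

/-- The configuration `τ(σ)` resulting from applying a schedule. -/
def apply (ta : TA L V P R) : Config L V P → List R → Config L V P
  | σ, [] => σ
  | σ, r :: τ => ta.apply ((ta.rule r).fire σ) τ

/-- The configurations visited by the path from `σ` along `τ` (including both endpoints). -/
def visited (ta : TA L V P R) : Config L V P → List R → List (Config L V P)
  | σ, [] => [σ]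
  | σ, r :: τ => σ :: ta.visited ((ta.rule r).fire σ) τ

/-- Reachability `σ →* σ'`. -/
def reaches (ta : TA L V P R) (σ σ' : Config L V P) : Prop :=
  ∃ τ : List R, ta.applicable σ τ ∧ ta.apply σ τ = σ'

/-- The set of all threshold guards occurring in rules of the automaton. -/
def guards (ta : TA L V P R) : Set (TGuard V P) :=
  {φ | ∃ r : R, φ ∈ (ta.rule r).guard}

/-- The context `ω(σ)`: rise guards of `ta` that are true in `σ` together with fall guards
of `ta` that are false in `σ`. -/
def context (ta : TA L V P R) (σ : Config L V P) : Set (TGuard V P) :=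
  {φ | φ ∈ ta.guards ∧ if φ.isRise then φ.holds σ.g σ.p else ¬ φ.holds σ.g σ.p}

/-- A schedule applicable at `σ` is steady if all configurations visited by the
corresponding path have the same context. -/
def steady (ta : TA L V P R) (σ : Config L V P) (τ : List R) : Prop :=
  ∀ σ' ∈ ta.visited σ τ, ta.context σ' = ta.context σ

end TA

section Aux

variable [Fintype P] [DecidableEq L]

lemma TA.apply_append (ta : TA L V P R) (σ : Config L V P) (τ₁ τ₂ : List R) :
    ta.apply σ (τ₁ ++ τ₂) = ta.apply (ta.apply σ τ₁) τ₂ := by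
  induction τ₁ generalizing σ <;> simp [TA.apply, *]

lemma TA.applicable_append (ta : TA L V P R) (σ : Config L V P) (τ₁ τ₂ : List R) :
    ta.applicable σ (τ₁ ++ τ₂) ↔
      ta.applicable σ τ₁ ∧ ta.applicable (ta.apply σ τ₁) τ₂ := by
  induction τ₁ generalizing σ <;> simp [TA.applicable, TA.apply, *, and_assoc]

lemma TA.reaches_trans (ta : TA L V P R) {σ σ₁ σ₂ : Config L V P}
    (h1 : ta.reaches σ σ₁) (h2 : ta.reaches σ₁ σ₂) : ta.reaches σ σ₂ := by
  obtain ⟨τ₁, h1a, h1e⟩ := h1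
  obtain ⟨τ₂, h2a, h2e⟩ := h2
  exact ⟨τ₁ ++ τ₂, by rw [ta.applicable_append]; exact ⟨h1a, h1e ▸ h2a⟩,
    by rw [ta.apply_append, h1e, h2e]⟩

lemma TA.guards_finite [Fintype R] (ta : TA L V P R) : ta.guards.Finite := by
  have : ta.guards ⊆ ⋃ r : R, {φ | φ ∈ (ta.rule r).guard} := by
    rintro φ ⟨r, hr⟩; exact Set.mem_iUnion.2 ⟨r, hr⟩
  exact (Set.finite_iUnion fun r => (ta.rule r).guard.finite_toSet).subset this

lemma TA.context_subset_guards (ta : TA L V P R) (σ : Config L V P) :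
    ta.context σ ⊆ ta.guards := fun _ h => h.1

lemma TA.context_subset_fire (ta : TA L V P R) (r : TRule L V P) (σ : Config L V P) :
    ta.context σ ⊆ ta.context (r.fire σ) := by
  rintro φ ⟨hg, hφ⟩
  refine ⟨hg, ?_⟩
  have hle : (σ.g φ.var : ℚ) ≤ ((r.fire σ).g φ.var : ℚ) := by
    simp only [TRule.fire]
    exact_mod_cast Nat.le_add_right _ _
  have hp : (r.fire σ).p = σ.p := rfl
  unfold TGuard.holds at *
  rw [hp]
  cases h : φ.isRise <;> rw [h] at hφ <;> simp only [if_true, if_false, Bool.false_eq_true] at *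
  · intro hc; exact hφ (lt_of_le_of_lt hle hc)
  · exact le_trans hφ hle

/-- Decomposition of a path from `σ` to `σ'` into `m + 1` steady segments. -/
def TA.Decomp (ta : TA L V P R) (σ σ' : Config L V P) (m : ℕ) : Prop :=
  ∃ a b : ℕ → Config L V P,
    a 0 = σ ∧ b m = σ' ∧
    (∀ i ≤ m, ∃ τ : List R,
      ta.applicable (a i) τ ∧ ta.steady (a i) τ ∧ ta.apply (a i) τ = b i) ∧
    (∀ i < m, a (i + 1) = b i ∨
      ∃ r : R, (ta.rule r).enabledAt (b i) ∧ (ta.rule r).fire (b i) = a (i + 1))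

lemma TA.exists_decomp [Fintype R] (ta : TA L V P R) :
    ∀ τ : List R, ∀ σ, ta.applicable σ τ →
      ∃ m, m ≤ (ta.guards \ ta.context σ).ncard ∧ ta.Decomp σ (ta.apply σ τ) m := by
  intro τ
  induction τ with
  | nil =>
    intro σ _
    exact ⟨0, Nat.zero_le _, fun _ => σ, fun _ => σ, rfl, rfl,
      fun i _ => ⟨[], trivial, by simp [TA.steady, TA.visited], rfl⟩,
      fun i hi => absurd hi (by omega)⟩
  | cons r τ' ih =>
    rintro σ ⟨hen, happ⟩
    obtain ⟨m, hm, a, b, ha0, hb, hseg, hlink⟩ := ih ((ta.rule r).fire σ) happ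
    by_cases hctx : ta.context ((ta.rule r).fire σ) = ta.context σ
    · refine ⟨m, by rwa [hctx] at hm,
        (fun i => if i = 0 then σ else a i), b, by simp, hb, ?_, ?_⟩
      · intro i hi
        rcases Nat.eq_zero_or_pos i with h0 | h0
        · subst h0
          obtain ⟨τ₀, hτa, hτs, hτe⟩ := hseg 0 (Nat.zero_le _)
          rw [ha0] at hτa hτs hτe
          simp only [reduceIte]
          refine ⟨r :: τ₀, ⟨hen, hτa⟩, ?_, hτe⟩
          intro σ'' hσ''
          simp only [TA.visited, List.mem_cons] at hσ''
          rcases hσ'' with h | h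
          · rw [h]
          · rw [hτs σ'' h, hctx]
        · simpa only [if_neg (Nat.pos_iff_ne_zero.mp h0)] using hseg i hi
      · intro i hi
        have : i + 1 ≠ 0 := by omega
        simpa only [if_neg this] using hlink i hi
    · have hsub : ta.context σ ⊆ ta.context ((ta.rule r).fire σ) :=
        ta.context_subset_fire (ta.rule r) σ
      have hlt : (ta.guards \ ta.context ((ta.rule r).fire σ)).ncard <
          (ta.guards \ ta.context σ).ncard := by
        apply Set.ncard_lt_ncard
        · constructor
          · exact Set.diff_subset_diff_right hsub
          · intro hcon
            obtain ⟨φ, hφ1, hφ2⟩ :=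
              Set.exists_of_ssubset (ssubset_of_subset_of_ne hsub (Ne.symm hctx))
            exact (hcon ⟨ta.context_subset_guards _ hφ1, hφ2⟩).2 hφ1
        · exact (ta.guards_finite).diff
      refine ⟨m + 1, by omega,
        (fun i => if i = 0 then σ else a (i - 1)),
        (fun i => if i = 0 then σ else b (i - 1)), by simp, by simp [hb, TA.apply], ?_, ?_⟩
      · intro i hi
        rcases Nat.eq_zero_or_pos i with h0 | h0
        · subst h0
          exact ⟨[], trivial, by simp [TA.steady, TA.visited], rfl⟩
        · have hne : i ≠ 0 := Nat.pos_iff_ne_zero.mp h0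
          simpa only [if_neg hne] using hseg (i - 1) (by omega)
      · intro i hi
        rcases Nat.eq_zero_or_pos i with h0 | h0
        · subst h0
          refine Or.inr ⟨r, ?_, ?_⟩
          · simpa using hen
          · simp [ha0]
        · have hne : i ≠ 0 := Nat.pos_iff_ne_zero.mp h0
          have hne' : i + 1 ≠ 0 := by omega
          simp only [if_neg hne, if_neg hne']
          have := hlink (i - 1) (by omega)
          rcases this with h | ⟨r', h1, h2⟩
          · left; rw [show i + 1 - 1 = i - 1 + 1 by omega, h]
          · right; exact ⟨r', h1, by rw [show i + 1 - 1 = i - 1 + 1 by omega, ← h2]⟩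

end Aux

/-- Let `Φ` be the set of guards of `TA` and `K = |Φ| + 1`.  Then `σ →* σ'` iff there are
configurations `σ = σ₀, σ'₀, σ₁, σ'₁, …, σ_K, σ'_K = σ'` such that every `σ'ᵢ` is reached
from `σᵢ` by a steady schedule, and every `σ_{i+1}` is obtained from `σ'ᵢ` by firing at most
one rule. -/
theorem reaches_iff_steady_segments [Fintype P] [DecidableEq L] [Fintype L] [Fintype R]
    (ta : TA L V P R) (K : ℕ) (hK : K = ta.guards.ncard + 1)
    (σ σ' : Config L V P) (hσ : ta.validConfig σ) (hσ' : ta.validConfig σ') :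
    ta.reaches σ σ' ↔
    ∃ a b : ℕ → Config L V P,
      a 0 = σ ∧ b K = σ' ∧
      (∀ i ≤ K, ∃ τ : List R,
        ta.applicable (a i) τ ∧ ta.steady (a i) τ ∧ ta.apply (a i) τ = b i) ∧
      (∀ i < K, a (i + 1) = b i ∨
        ∃ r : R, (ta.rule r).enabledAt (b i) ∧ (ta.rule r).fire (b i) = a (i + 1)) := by
  constructor
  · rintro ⟨τ, hτa, hτe⟩
    obtain ⟨m, hm, a, b, ha0, hbm, hseg, hlink⟩ := ta.exists_decomp τ σ hτa
    have hmK : m < K := by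
      have := Set.ncard_le_ncard (Set.diff_subset (s := ta.guards) (t := ta.context σ))
        ta.guards_finite
      omega
    refine ⟨fun i => if i ≤ m then a i else b m, fun i => if i < m then b i else b m,
      ?_, ?_, ?_, ?_⟩
    · simp [ha0]
    · simp [hbm, hτe, Nat.not_lt.mpr (le_of_lt hmK)]
    · intro i _
      by_cases h : i ≤ m
      · obtain ⟨τ₀, h1, h2, h3⟩ := hseg i h
        refine ⟨τ₀, by simpa [h] using h1, by simpa [h] using h2, ?_⟩
        by_cases h' : i < m
        · simp [h, h', h3]
        · have him : i = m := by omega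
          subst him
          simp [h3]
      · exact ⟨[], trivial, by simp [TA.steady, TA.visited], by simp [TA.apply, h, show ¬ i < m by omega]⟩
    · intro i _
      by_cases h : i < m
      · have h1 : i + 1 ≤ m := h
        rcases hlink i h with heq | ⟨r, hr1, hr2⟩
        · left; simp [h, h1, heq]
        · right; exact ⟨r, by simpa [h] using hr1, by simpa [h, h1] using hr2⟩
      · left
        by_cases h' : i + 1 ≤ m
        · omega
        · simp [h, h']
  · rintro ⟨a, b, ha0, hbK, hseg, hlink⟩
    have key : ∀ i ≤ K, ta.reaches σ (b i) := by
      intro i hi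
      induction i with
      | zero =>
        obtain ⟨τ, h1, _, h3⟩ := hseg 0 (Nat.zero_le _)
        exact ⟨τ, ha0 ▸ h1, ha0 ▸ h3⟩
      | succ n ihn =>
        have h1 : ta.reaches σ (b n) := ihn (by omega)
        have h2 : ta.reaches (b n) (a (n + 1)) := by
          rcases hlink n (by omega) with heq | ⟨r, hr1, hr2⟩
          · exact ⟨[], trivial, heq.symm⟩
          · exact ⟨[r], ⟨hr1, trivial⟩, hr2⟩
        obtain ⟨τ, h3, _, h4⟩ := hseg (n + 1) hi
        exact ta.reaches_trans (ta.reaches_trans h1 h2) ⟨τ, h3, h4⟩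
    exact hbK ▸ key K le_rfl
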